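/- Let A be a uniform algebra on X and E ⊆ X a closed set such that the restriction algebra A|E is closed in C(E). Define A_E = {f ∈ C(X) : f|E ∈ A|E}. Then A_E is a closed subalgebra of C(X) containing A, and A_E is maximal in C(X) if and only if A|E is maximal in C(E). -/
import Mathlib


variable {X : Type} [TopologicalSpace X] [CompactSpace X] [T2Space X]

/-- Restriction to a subset `E ⊆ X`, as an algebra homomorphism `C(X, ℂ) →ₐ[ℂ] C(E, ℂ)`. -/
noncomputable def restrictHom (E : Set X) : C(X, ℂ) →ₐ[ℂ] C(E, ℂ) :=
  ContinuousMap.compRightAlgHom ℂ ℂ ⟨Subtype.val, continuous_subtype_val⟩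

/-- A closed subalgebra `B` of `C(Y, ℂ)` is maximal if it is proper and there is no
closed subalgebra strictly between `B` and `C(Y, ℂ)`. -/
def MaximalIn {Y : Type} [TopologicalSpace Y] (B : Subalgebra ℂ C(Y, ℂ)) : Prop :=
  B ≠ ⊤ ∧ ∀ D : Subalgebra ℂ C(Y, ℂ), IsClosed (D : Set C(Y, ℂ)) → B ≤ D →
    D = B ∨ D = ⊤

/-- For a closed set `E` with `A|E` closed in `C(E)`: the algebra
`A_E = {f ∈ C(X) : f|E ∈ A|E}` contains `A`, is closed, and is maximal in `C(X)` iff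
`A|E` is maximal in `C(E)`. -/
theorem stmt_11 (A : Subalgebra ℂ C(X, ℂ))
    (hclosed : IsClosed (A : Set C(X, ℂ)))
    (hsep : ∀ x y : X, x ≠ y → ∃ f ∈ A, f x ≠ f y)
    (E : Set X) (hE : IsClosed E)
    (hAEclosed : IsClosed ((A.map (restrictHom E) : Subalgebra ℂ C(E, ℂ)) : Set C(E, ℂ)))
    (hAEproper : A.map (restrictHom E) ≠ ⊤) :
    A ≤ (A.map (restrictHom E)).comap (restrictHom E) ∧
    IsClosed (((A.map (restrictHom E)).comap (restrictHom E) : Subalgebra ℂ C(X, ℂ)) :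
      Set C(X, ℂ)) ∧
    (MaximalIn ((A.map (restrictHom E)).comap (restrictHom E)) ↔
      MaximalIn (A.map (restrictHom E))) := by
  haveI : CompactSpace E := isCompact_iff_compactSpace.mp hE.isCompact
  set φ := restrictHom (X := X) E with hφ
  have hcont : Continuous φ := ContinuousMap.compRightAlgHom_continuous ℂ ℂ _
  have hsurj : Function.Surjective φ := by
    intro g
    obtain ⟨f, hf⟩ := g.exists_restrict_eq hE
    exact ⟨f, hf⟩
  set B := A.map φ with hB
  set AE := B.comap φ with hAE
  -- continuous linear map version
  let φL : C(X, ℂ) →L[ℂ] C(E, ℂ) := { toLinearMap := φ.toLinearMap, cont := hcont }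
  have hφL : ∀ f, φL f = φ f := fun _ => rfl
  -- map of comap is identity on the image direction (surjectivity)
  have hmapcomap : ∀ D' : Subalgebra ℂ C(E, ℂ), (D'.comap φ).map φ = D' := by
    intro D'
    apply le_antisymm
    · rintro _ ⟨f, hf, rfl⟩; exact hf
    · intro g hg
      obtain ⟨f, rfl⟩ := hsurj g
      exact ⟨f, hg, rfl⟩
  -- saturation of any D containing AE
  have hsat : ∀ D : Subalgebra ℂ C(X, ℂ), AE ≤ D → (D.map φ).comap φ = D := by
    intro D hD
    have hALE' : A ≤ D := fun x hx => hD ⟨x, hx, rfl⟩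
    apply le_antisymm
    · rintro f hf
      obtain ⟨d, hd, hdf⟩ := hf
      have hker : f - d ∈ AE := by
        have : φ (f - d) = 0 := by rw [map_sub, sub_eq_zero]; exact hdf.symm
        
        simp only [hAE, Subalgebra.mem_comap, this]
        exact zero_mem B
      have h1 : f - d ∈ D := hD hker
      have h2 : d ∈ D := hd
      simpa using add_mem h1 h2
    · intro f hf
      exact ⟨f, hf, rfl⟩
  -- image of a closed D containing AE is closed
  have himgclosed : ∀ D : Subalgebra ℂ C(X, ℂ), IsClosed (D : Set C(X, ℂ)) → AE ≤ D →
      IsClosed ((D.map φ : Subalgebra ℂ C(E, ℂ)) : Set C(E, ℂ)) := by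
    intro D hDclosed hD
    have hopen : IsOpen (φ '' (↑D)ᶜ) := by
      have := φL.isOpenMap hsurj (↑D)ᶜ hDclosed.isOpen_compl
      simpa [Set.image_image, hφL] using this
    have hcompl : (φ '' (↑D)ᶜ) = ((D.map φ : Subalgebra ℂ C(E, ℂ)) : Set C(E, ℂ))ᶜ := by
      ext g
      constructor
      · rintro ⟨f, hf, rfl⟩
        intro hg
        exact hf (by rw [← hsat D hD]; exact hg)
      · intro hg
        obtain ⟨f, rfl⟩ := hsurj g
        refine ⟨f, fun hf => hg ⟨f, hf, rfl⟩, rfl⟩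
    have : IsOpen (((D.map φ : Subalgebra ℂ C(E, ℂ)) : Set C(E, ℂ))ᶜ) := hcompl ▸ hopen
    simpa using this.isClosed_compl
  have hALE : A ≤ AE := fun f hf => ⟨f, hf, rfl⟩
  have hAEc : IsClosed ((AE : Subalgebra ℂ C(X, ℂ)) : Set C(X, ℂ)) :=
    hAEclosed.preimage hcont
  refine ⟨hALE, hAEc, ?_, ?_⟩
  · -- MaximalIn AE → MaximalIn B
    rintro ⟨_, hmax⟩
    refine ⟨hAEproper, fun D' hD'closed hBD' => ?_⟩
    have h1 : AE ≤ D'.comap φ := fun f hf => hBD' hf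
    have h2 : IsClosed ((D'.comap φ : Subalgebra ℂ C(X, ℂ)) : Set C(X, ℂ)) :=
      hD'closed.preimage hcont
    rcases hmax _ h2 h1 with h | h
    · left; rw [← hmapcomap D', h, hB, hAE, hmapcomap]
    · right
      rw [← hmapcomap D', h]
      apply le_antisymm le_top
      intro g _
      obtain ⟨f, rfl⟩ := hsurj g
      exact ⟨f, trivial, rfl⟩
  · -- MaximalIn B → MaximalIn AE
    rintro ⟨hBne, hmax⟩
    have hAEne : AE ≠ ⊤ := by
      intro h
      apply hBne
      rw [← hmapcomap B, ← hAE, h]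
      apply le_antisymm le_top
      intro g _
      obtain ⟨f, rfl⟩ := hsurj g
      exact ⟨f, trivial, rfl⟩
    refine ⟨hAEne, fun D hDclosed hAED => ?_⟩
    have h1 : B ≤ D.map φ := by
      rw [hB]
      rintro _ ⟨f, hf, rfl⟩
      exact ⟨f, hAED (hALE hf), rfl⟩
    rcases hmax _ (himgclosed D hDclosed hAED) h1 with h | h
    · left; rw [← hsat D hAED, h]
    · right; rw [← hsat D hAED, h]
      apply le_antisymm le_top
      intro f _
      exact trivial
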